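/- In the setting of the previous statement, with Δ_#(a # b) = Σ (a₁ # 1)Γ(a₂)Δ_B(b), i.e. Δ_#(a # b) = Σ (a₁ # S(a₂)a₄ b₂) ⊗ (a₃ # b₁), the isomorphism θ(a ⊗ b) = Σ a₁ # S(a₂)b is also a coalgebra map: Δ_#(θ(a ⊗ b)) = Σ θ(a₁ ⊗ b₂) ⊗ θ(a₂ ⊗ b₁), where Δ_A(a) = Σ a₁ ⊗ a₂ and Δ_B(b) = Σ b₂ ⊗ b₁ (since B = A^cop). Hence the bicrossproduct A # B is isomorphic as a Hopf algebra to the tensor product Hopf algebra A ⊗ A^cop. -/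

import Mathlib

open TensorProduct Coalgebra HopfAlgebra

set_option synthInstance.maxHeartbeats 400000
set_option maxHeartbeats 1000000

namespace Stmt12Aux

variable {K A : Type*} [Field K] [Ring A] [HopfAlgebra K A]
variable {C : Type*} [Ring C] [Algebra K C]



noncomputable def conv (f g : A →ₗ[K] C) : A →ₗ[K] C :=
  LinearMap.mul' K C ∘ₗ TensorProduct.map f g ∘ₗ comul

noncomputable def cu : A →ₗ[K] C := Algebra.linearMap K C ∘ₗ counit

lemma cu_apply (a : A) : (cu (K := K) (A := A) (C := C)) a = algebraMap K C (counit (R := K) a) := rfl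

lemma conv_repr (f g : A →ₗ[K] C) (a : A) (r : Coalgebra.Repr K a (A × A)) :
    conv f g a = ∑ i ∈ r.index, f (r.left i) * g (r.right i) := by
  simp [conv, ← r.eq, map_sum]

noncomputable def Qmap : A ⊗[K] (A ⊗[K] (A ⊗[K] A)) →ₗ[K] A ⊗[K] A :=
  TensorProduct.map
      (LinearMap.mul' K A ∘ₗ LinearMap.rTensor A (antipode (R := K)))
      (LinearMap.mul' K A ∘ₗ LinearMap.rTensor A (antipode (R := K)))
    ∘ₗ (TensorProduct.assoc K A A (A ⊗[K] A)).symm.toLinearMap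
    ∘ₗ LinearMap.lTensor A (TensorProduct.leftComm K A A A).toLinearMap
    ∘ₗ (TensorProduct.leftComm K A A (A ⊗[K] A)).toLinearMap

lemma Qmap_tmul (x y z w : A) :
    Qmap (x ⊗ₜ[K] (y ⊗ₜ[K] (z ⊗ₜ[K] w))) =
      (antipode (R := K) y * z) ⊗ₜ[K] (antipode (R := K) x * w) := by
  simp [Qmap, TensorProduct.leftComm]

noncomputable def Tmap : A →ₗ[K] A ⊗[K] A :=
  TensorProduct.map (antipode (R := K)) (antipode (R := K))
    ∘ₗ (TensorProduct.comm K A A).toLinearMap ∘ₗ comul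

lemma Tmap_repr (a : A) (r : Coalgebra.Repr K a (A × A)) :
    Tmap a = ∑ i ∈ r.index,
      antipode (R := K) (r.right i) ⊗ₜ[K] antipode (R := K) (r.left i) := by
  simp [Tmap, ← r.eq, map_sum]

lemma counit_smul_sum (a : A) (r : Coalgebra.Repr K a (A × A)) :
    ∑ i ∈ r.index, counit (R := K) (r.left i) • r.right i = a := by
  have h := congrArg (TensorProduct.lid K A) (Coalgebra.sum_counit_tmul_eq (R := K) r)
  rw [map_sum] at h
  simp only [TensorProduct.lid_tmul, one_smul] at h
  exact h

lemma conv_Tmap_comul : conv (Tmap (K := K) (A := A)) comul = cu := by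
  ext a
  let r := ℛ K a
  let r1 : (i : r.ι) → Coalgebra.Repr K (r.left i) (A × A) := fun i => ℛ K (r.left i)
  let r2 : (i : r.ι) → Coalgebra.Repr K (r.right i) (A × A) := fun i => ℛ K (r.right i)
  let rC : (i : r.ι) → (k : (r2 i).ι) → Coalgebra.Repr K ((r2 i).left k) (A × A) :=
    fun i k => ℛ K ((r2 i).left k)
  let rD : (i : r.ι) → (k : (r2 i).ι) → Coalgebra.Repr K ((r2 i).right k) (A × A) :=
    fun i k => ℛ K ((r2 i).right k)
  have coas1 := Coalgebra.sum_tmul_tmul_eq (R := K) r r1 r2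
  have E12 := congrArg (LinearMap.lTensor A (LinearMap.lTensor A (comul (R := K)))) coas1
  simp only [map_sum, LinearMap.lTensor_tmul] at E12
  have E1 : ∑ i ∈ r.index, ∑ j ∈ (r1 i).index,
      (r1 i).left j ⊗ₜ[K] ((r1 i).right j ⊗ₜ[K] comul (R := K) (r.right i))
      = ∑ i ∈ r.index, ∑ j ∈ (r1 i).index, ∑ k ∈ (r2 i).index,
        (r1 i).left j ⊗ₜ[K] ((r1 i).right j ⊗ₜ[K]
          ((r2 i).left k ⊗ₜ[K] (r2 i).right k)) := by
    refine Finset.sum_congr rfl fun i _ => Finset.sum_congr rfl fun j _ => ?_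
    rw [← (r2 i).eq, tmul_sum, tmul_sum]
  have E2 : ∑ i ∈ r.index, ∑ k ∈ (r2 i).index,
      r.left i ⊗ₜ[K] ((r2 i).left k ⊗ₜ[K] comul (R := K) ((r2 i).right k))
      = ∑ i ∈ r.index, ∑ k ∈ (r2 i).index, ∑ m ∈ (rD i k).index,
        r.left i ⊗ₜ[K] ((r2 i).left k ⊗ₜ[K]
          ((rD i k).left m ⊗ₜ[K] (rD i k).right m)) := by
    refine Finset.sum_congr rfl fun i _ => Finset.sum_congr rfl fun k _ => ?_
    rw [← (rD i k).eq, tmul_sum, tmul_sum]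
  have E3 : ∑ i ∈ r.index, ∑ k ∈ (r2 i).index, ∑ m ∈ (rD i k).index,
        r.left i ⊗ₜ[K] ((r2 i).left k ⊗ₜ[K]
          ((rD i k).left m ⊗ₜ[K] (rD i k).right m))
      = ∑ i ∈ r.index, ∑ k ∈ (r2 i).index, ∑ m ∈ (rC i k).index,
        r.left i ⊗ₜ[K] ((rC i k).left m ⊗ₜ[K]
          ((rC i k).right m ⊗ₜ[K] (r2 i).right k)) := by
    refine Finset.sum_congr rfl fun i _ => ?_
    have c2 := Coalgebra.sum_tmul_tmul_eq (R := K) (r2 i) (rC i) (rD i)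
    calc ∑ k ∈ (r2 i).index, ∑ m ∈ (rD i k).index,
          r.left i ⊗ₜ[K] ((r2 i).left k ⊗ₜ[K] ((rD i k).left m ⊗ₜ[K] (rD i k).right m))
        = r.left i ⊗ₜ[K] (∑ k ∈ (r2 i).index, ∑ m ∈ (rD i k).index,
            (r2 i).left k ⊗ₜ[K] ((rD i k).left m ⊗ₜ[K] (rD i k).right m)) := by
          rw [tmul_sum]; exact Finset.sum_congr rfl fun k _ => by rw [tmul_sum]
      _ = r.left i ⊗ₜ[K] (∑ k ∈ (r2 i).index, ∑ m ∈ (rC i k).index,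
            (rC i k).left m ⊗ₜ[K] ((rC i k).right m ⊗ₜ[K] (r2 i).right k)) := by
          rw [← c2]
      _ = ∑ k ∈ (r2 i).index, ∑ m ∈ (rC i k).index,
          r.left i ⊗ₜ[K] ((rC i k).left m ⊗ₜ[K] ((rC i k).right m ⊗ₜ[K] (r2 i).right k)) := by
          rw [tmul_sum]; exact Finset.sum_congr rfl fun k _ => by rw [tmul_sum]
  calc conv (Tmap (K := K) (A := A)) comul a
      = ∑ i ∈ r.index, Tmap (r.left i) * comul (R := K) (r.right i) := conv_repr _ _ _ r
    _ = ∑ i ∈ r.index, ∑ j ∈ (r1 i).index, ∑ k ∈ (r2 i).index,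
          (antipode (R := K) ((r1 i).right j) * (r2 i).left k) ⊗ₜ[K]
            (antipode (R := K) ((r1 i).left j) * (r2 i).right k) := by
        refine Finset.sum_congr rfl fun i _ => ?_
        rw [Tmap_repr _ (r1 i), ← (r2 i).eq, Finset.sum_mul]
        refine Finset.sum_congr rfl fun j _ => ?_
        rw [Finset.mul_sum]
        exact Finset.sum_congr rfl fun k _ => Algebra.TensorProduct.tmul_mul_tmul _ _ _ _
    _ = Qmap (∑ i ∈ r.index, ∑ j ∈ (r1 i).index, ∑ k ∈ (r2 i).index,
          (r1 i).left j ⊗ₜ[K] ((r1 i).right j ⊗ₜ[K]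
            ((r2 i).left k ⊗ₜ[K] (r2 i).right k))) := by
        rw [map_sum]
        refine Finset.sum_congr rfl fun i _ => ?_
        rw [map_sum]
        refine Finset.sum_congr rfl fun j _ => ?_
        rw [map_sum]
        exact Finset.sum_congr rfl fun k _ => (Qmap_tmul _ _ _ _).symm
    _ = Qmap (∑ i ∈ r.index, ∑ k ∈ (r2 i).index, ∑ m ∈ (rC i k).index,
          r.left i ⊗ₜ[K] ((rC i k).left m ⊗ₜ[K]
            ((rC i k).right m ⊗ₜ[K] (r2 i).right k))) := by
        rw [← E1, E12, E2, E3]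
    _ = ∑ i ∈ r.index, ∑ k ∈ (r2 i).index, ∑ m ∈ (rC i k).index,
          (antipode (R := K) ((rC i k).left m) * (rC i k).right m) ⊗ₜ[K]
            (antipode (R := K) (r.left i) * (r2 i).right k) := by
        rw [map_sum]
        refine Finset.sum_congr rfl fun i _ => ?_
        rw [map_sum]
        refine Finset.sum_congr rfl fun k _ => ?_
        rw [map_sum]
        exact Finset.sum_congr rfl fun m _ => Qmap_tmul _ _ _ _
    _ = ∑ i ∈ r.index, ∑ k ∈ (r2 i).index,
          (1 : A) ⊗ₜ[K] (antipode (R := K) (r.left i) *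
            (counit (R := K) ((r2 i).left k) • (r2 i).right k)) := by
        refine Finset.sum_congr rfl fun i _ => Finset.sum_congr rfl fun k _ => ?_
        rw [← TensorProduct.sum_tmul, sum_antipode_mul_eq_algebraMap_counit (rC i k), Algebra.algebraMap_eq_smul_one,
          TensorProduct.smul_tmul, mul_smul_comm]
    _ = ∑ i ∈ r.index, (1 : A) ⊗ₜ[K] (antipode (R := K) (r.left i) * r.right i) := by
        refine Finset.sum_congr rfl fun i _ => ?_
        rw [← tmul_sum, ← Finset.mul_sum, counit_smul_sum _ (r2 i)]
    _ = (1 : A) ⊗ₜ[K] algebraMap K A (counit (R := K) a) := by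
        rw [← tmul_sum, sum_antipode_mul_eq_algebraMap_counit r]
    _ = cu a := by
        rw [cu_apply, Algebra.TensorProduct.algebraMap_apply, Algebra.algebraMap_eq_smul_one,
          TensorProduct.smul_tmul]



/-- `x ⊗ y ↦ Σ x₁ ⊗ (x₂ ⊗ y)` -/
noncomputable def bmap : A ⊗[K] A →ₗ[K] A ⊗[K] (A ⊗[K] A) :=
  (TensorProduct.assoc K A A A).toLinearMap ∘ₗ LinearMap.rTensor A (comul (R := K))

/-- `x ⊗ y ↦ Σ x ⊗ (y₁ ⊗ y₂)` -/
noncomputable def gmap : A ⊗[K] A →ₗ[K] A ⊗[K] (A ⊗[K] A) :=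
  LinearMap.lTensor A (comul (R := K))

lemma bmap_comul_eq_gmap_comul :
    (bmap ∘ₗ comul : A →ₗ[K] A ⊗[K] (A ⊗[K] A)) = gmap ∘ₗ comul := by
  ext a
  simpa [bmap, gmap] using Coalgebra.coassoc_apply (R := K) a

lemma bmap_repr {ι : Type*} (x y : A) (r : Coalgebra.Repr K x ι) :
    bmap (x ⊗ₜ[K] y) = ∑ i ∈ r.index, r.left i ⊗ₜ[K] (r.right i ⊗ₜ[K] y) := by
  rw [bmap, LinearMap.comp_apply]
  rw [LinearMap.rTensor_tmul, ← r.eq, sum_tmul]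
  rw [map_sum]
  simp

lemma gmap_repr (x y : A) (r : Coalgebra.Repr K y (A × A)) :
    gmap (x ⊗ₜ[K] y) = ∑ i ∈ r.index, x ⊗ₜ[K] (r.left i ⊗ₜ[K] r.right i) := by
  simp [gmap, ← r.eq, tmul_sum, map_sum]

-- tree composites
noncomputable def Mt4 : A →ₗ[K] A ⊗[K] (A ⊗[K] (A ⊗[K] A)) :=
  LinearMap.lTensor A gmap ∘ₗ bmap ∘ₗ comul

noncomputable def Mt4' : A →ₗ[K] A ⊗[K] (A ⊗[K] (A ⊗[K] A)) :=
  LinearMap.lTensor A bmap ∘ₗ bmap ∘ₗ comul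

noncomputable def Mt0 : A →ₗ[K] A ⊗[K] (A ⊗[K] (A ⊗[K] (A ⊗[K] (A ⊗[K] A)))) :=
  LinearMap.lTensor A (LinearMap.lTensor A (LinearMap.lTensor A gmap))
    ∘ₗ LinearMap.lTensor A (LinearMap.lTensor A bmap)
    ∘ₗ LinearMap.lTensor A bmap ∘ₗ bmap ∘ₗ comul

noncomputable def MtM : A →ₗ[K] A ⊗[K] (A ⊗[K] (A ⊗[K] (A ⊗[K] (A ⊗[K] A)))) :=
  LinearMap.lTensor A (LinearMap.lTensor A (LinearMap.lTensor A bmap))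
    ∘ₗ LinearMap.lTensor A (LinearMap.lTensor A gmap)
    ∘ₗ LinearMap.lTensor A bmap ∘ₗ bmap ∘ₗ comul

lemma L1 : (LinearMap.lTensor A bmap ∘ₗ gmap : A ⊗[K] A →ₗ[K] _)
    = LinearMap.lTensor A gmap ∘ₗ gmap := by
  show LinearMap.lTensor A bmap ∘ₗ LinearMap.lTensor A comul
      = LinearMap.lTensor A gmap ∘ₗ LinearMap.lTensor A comul
  rw [← LinearMap.lTensor_comp, ← LinearMap.lTensor_comp, bmap_comul_eq_gmap_comul]

lemma L2 : (LinearMap.lTensor A (LinearMap.lTensor A bmap) ∘ₗ LinearMap.lTensor A gmap :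
      A ⊗[K] (A ⊗[K] A) →ₗ[K] _)
    = LinearMap.lTensor A (LinearMap.lTensor A gmap) ∘ₗ LinearMap.lTensor A gmap := by
  rw [← LinearMap.lTensor_comp, L1, LinearMap.lTensor_comp]

lemma L3 : (LinearMap.lTensor A (LinearMap.lTensor A (LinearMap.lTensor A bmap)) ∘ₗ
      LinearMap.lTensor A (LinearMap.lTensor A gmap) :
      A ⊗[K] (A ⊗[K] (A ⊗[K] A)) →ₗ[K] _)
    = LinearMap.lTensor A (LinearMap.lTensor A (LinearMap.lTensor A gmap)) ∘ₗ
      LinearMap.lTensor A (LinearMap.lTensor A gmap) := by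
  rw [← LinearMap.lTensor_comp, L2, LinearMap.lTensor_comp]

lemma treeEq2 : (Mt4' : A →ₗ[K] _) = Mt4 := by
  ext a
  have h1 : bmap (comul (R := K) a) = gmap (comul a) := LinearMap.congr_fun bmap_comul_eq_gmap_comul a
  have h2 := LinearMap.congr_fun (L1 (K := K) (A := A)) (comul a)
  simp only [LinearMap.coe_comp, Function.comp_apply] at h2
  simp only [Mt4, Mt4', LinearMap.coe_comp, Function.comp_apply, h1, h2]

lemma treeEq1 : (Mt0 : A →ₗ[K] _) = MtM := by
  ext a
  have h1 : bmap (comul (R := K) a) = gmap (comul a) := LinearMap.congr_fun bmap_comul_eq_gmap_comul a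
  have h2 := LinearMap.congr_fun (L1 (K := K) (A := A)) (comul a)
  have h3 := LinearMap.congr_fun (L2 (K := K) (A := A)) (gmap (comul (R := K) a))
  have h4 := LinearMap.congr_fun (L3 (K := K) (A := A))
    (LinearMap.lTensor A gmap (gmap (comul (R := K) a)))
  simp only [LinearMap.coe_comp, Function.comp_apply] at h2 h3 h4
  simp only [Mt0, MtM, LinearMap.coe_comp, Function.comp_apply, h1, h2, h3, h4]




/-- `x ⊗ y ↦ S x * y` -/
noncomputable def m2 : A ⊗[K] A →ₗ[K] A :=
  LinearMap.mul' K A ∘ₗ LinearMap.rTensor A (antipode (R := K))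

lemma m2_tmul (x y : A) : m2 (x ⊗ₜ[K] y) = antipode (R := K) x * y := by
  simp [m2]

/-- `Θ : a ⊗ b ↦ Σ a₁ ⊗ S a₂ * b` -/
noncomputable def Tht : A ⊗[K] A →ₗ[K] A ⊗[K] A :=
  LinearMap.lTensor A m2 ∘ₗ bmap

/-- `x ⊗ y ↦ x ⊗ (S y * v)` -/
noncomputable def psm (v : A) : A ⊗[K] A →ₗ[K] A ⊗[K] A :=
  LinearMap.lTensor A (LinearMap.mulRight K v ∘ₗ antipode (R := K))

lemma psm_tmul (v x y : A) : psm v (x ⊗ₜ[K] y) = x ⊗ₜ[K] (antipode (R := K) y * v) := by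
  simp [psm]

noncomputable def Q4 (u v : A) : A ⊗[K] (A ⊗[K] (A ⊗[K] A)) →ₗ[K] (A ⊗[K] A) ⊗[K] (A ⊗[K] A) :=
  TensorProduct.map (psm v) (psm u) ∘ₗ (TensorProduct.assoc K A A (A ⊗[K] A)).symm.toLinearMap

lemma Q4_tmul (u v g₁ g₂ g₃ g₄ : A) :
    Q4 u v (g₁ ⊗ₜ[K] (g₂ ⊗ₜ[K] (g₃ ⊗ₜ[K] g₄))) =
      (g₁ ⊗ₜ[K] (antipode (R := K) g₂ * v)) ⊗ₜ[K] (g₃ ⊗ₜ[K] (antipode (R := K) g₄ * u)) := by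
  simp [Q4, psm_tmul]

noncomputable def Jm (v : A) : A ⊗[K] (A ⊗[K] A) →ₗ[K] A ⊗[K] A :=
  LinearMap.rTensor A (LinearMap.mul' K A) ∘ₗ (TensorProduct.assoc K A A A).symm.toLinearMap
    ∘ₗ LinearMap.lTensor A (LinearMap.rTensor A (LinearMap.mulRight K v ∘ₗ antipode (R := K)))

lemma Jm_tmul (v g₄ g₅ g₆ : A) :
    Jm v (g₄ ⊗ₜ[K] (g₅ ⊗ₜ[K] g₆)) = (g₄ * (antipode (R := K) g₅ * v)) ⊗ₜ[K] g₆ := by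
  simp [Jm]

noncomputable def K1 : A ⊗[K] (A ⊗[K] (A ⊗[K] A)) →ₗ[K] A ⊗[K] (A ⊗[K] A) :=
  LinearMap.rTensor (A ⊗[K] A) m2 ∘ₗ (TensorProduct.assoc K A A (A ⊗[K] A)).symm.toLinearMap

lemma K1_tmul (g₂ p g₃ g₆ : A) :
    K1 (g₂ ⊗ₜ[K] (p ⊗ₜ[K] (g₃ ⊗ₜ[K] g₆))) =
      (antipode (R := K) g₂ * p) ⊗ₜ[K] (g₃ ⊗ₜ[K] g₆) := by
  simp [K1, m2_tmul]

noncomputable def Q6 (u v : A) :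
    A ⊗[K] (A ⊗[K] (A ⊗[K] (A ⊗[K] (A ⊗[K] A)))) →ₗ[K] (A ⊗[K] A) ⊗[K] (A ⊗[K] A) :=
  TensorProduct.map LinearMap.id (psm u)
    ∘ₗ (TensorProduct.assoc K A A (A ⊗[K] A)).symm.toLinearMap
    ∘ₗ LinearMap.lTensor A K1
    ∘ₗ LinearMap.lTensor A (LinearMap.lTensor A (TensorProduct.leftComm K A A A).toLinearMap)
    ∘ₗ LinearMap.lTensor A (LinearMap.lTensor A (LinearMap.lTensor A (Jm v)))

lemma Q6_tmul (u v g₁ g₂ g₃ g₄ g₅ g₆ : A) :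
    Q6 u v (g₁ ⊗ₜ[K] (g₂ ⊗ₜ[K] (g₃ ⊗ₜ[K] (g₄ ⊗ₜ[K] (g₅ ⊗ₜ[K] g₆))))) =
      (g₁ ⊗ₜ[K] (antipode (R := K) g₂ * (g₄ * (antipode (R := K) g₅ * v)))) ⊗ₜ[K]
        (g₃ ⊗ₜ[K] (antipode (R := K) g₆ * u)) := by
  simp [Q6, Jm_tmul, K1_tmul, psm_tmul, TensorProduct.leftComm]

/-- the shuffle `(x ⊗ y) ⊗ (u ⊗ v) ↦ (x ⊗ v) ⊗ (y ⊗ u)` -/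
noncomputable def taum : (A ⊗[K] A) ⊗[K] (A ⊗[K] A) →ₗ[K] (A ⊗[K] A) ⊗[K] (A ⊗[K] A) :=
  (TensorProduct.tensorTensorTensorComm K A A A A).toLinearMap
    ∘ₗ LinearMap.lTensor (A ⊗[K] A) (TensorProduct.comm K A A).toLinearMap

lemma taum_tmul (x y u v : A) :
    taum ((x ⊗ₜ[K] y) ⊗ₜ[K] (u ⊗ₜ[K] v)) = (x ⊗ₜ[K] v) ⊗ₜ[K] (y ⊗ₜ[K] u) := by
  simp [taum]

/-- `F : (a₁⊗(a₂⊗(a₃⊗a₄))) ⊗ (u'⊗v') ↦ (a₁ ⊗ (S a₂ * a₄) * v') ⊗ (a₃ ⊗ u')` -/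
noncomputable def Fm : (A ⊗[K] (A ⊗[K] (A ⊗[K] A))) ⊗[K] (A ⊗[K] A) →ₗ[K]
    (A ⊗[K] A) ⊗[K] (A ⊗[K] A) :=
  TensorProduct.map
      (LinearMap.lTensor A (LinearMap.mul' K A ∘ₗ LinearMap.rTensor A m2)
        ∘ₗ (TensorProduct.assoc K A (A ⊗[K] A) A).toLinearMap)
      LinearMap.id
    ∘ₗ (TensorProduct.tensorTensorTensorComm K (A ⊗[K] (A ⊗[K] A)) A A A).toLinearMap
    ∘ₗ LinearMap.rTensor (A ⊗[K] A)
        ((TensorProduct.assoc K A (A ⊗[K] A) A).symm.toLinearMap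
          ∘ₗ LinearMap.lTensor A (TensorProduct.assoc K A A A).symm.toLinearMap)
    ∘ₗ TensorProduct.map
        (LinearMap.lTensor A (LinearMap.lTensor A (TensorProduct.comm K A A).toLinearMap))
        (TensorProduct.comm K A A).toLinearMap

lemma Fm_tmul (a₁ a₂ a₃ a₄ u' v' : A) :
    Fm ((a₁ ⊗ₜ[K] (a₂ ⊗ₜ[K] (a₃ ⊗ₜ[K] a₄))) ⊗ₜ[K] (u' ⊗ₜ[K] v')) =
      (a₁ ⊗ₜ[K] ((antipode (R := K) a₂ * a₄) * v')) ⊗ₜ[K] (a₃ ⊗ₜ[K] u') := by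
  simp [Fm, m2_tmul]

noncomputable def D4 : A →ₗ[K] A ⊗[K] (A ⊗[K] (A ⊗[K] A)) :=
  LinearMap.lTensor A (LinearMap.lTensor A (comul (R := K)))
    ∘ₗ LinearMap.lTensor A (comul (R := K)) ∘ₗ comul

noncomputable def Dm : A ⊗[K] A →ₗ[K] (A ⊗[K] A) ⊗[K] (A ⊗[K] A) :=
  Fm ∘ₗ TensorProduct.map D4 (comul (R := K))







/-- expansion of `bmap (comul a)` -/
lemma exp1 (a : A) (r : Coalgebra.Repr K a (A × A)) (rL : ∀ i, Coalgebra.Repr K (r.left i) (A × A)) :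
    bmap (comul (R := K) a) =
      ∑ i ∈ r.index, ∑ k ∈ (rL i).index,
        (rL i).left k ⊗ₜ[K] ((rL i).right k ⊗ₜ[K] r.right i) := by
  rw [← r.eq, map_sum]
  exact Finset.sum_congr rfl fun i _ => bmap_repr _ _ (rL i)

lemma exp2 (a : A) (r : Coalgebra.Repr K a (A × A)) (rL : ∀ i, Coalgebra.Repr K (r.left i) (A × A))
    (rB : ∀ i k, Coalgebra.Repr K ((rL i).right k) (A × A)) :
    LinearMap.lTensor A bmap (bmap (comul (R := K) a)) =
      ∑ i ∈ r.index, ∑ k ∈ (rL i).index, ∑ s ∈ (rB i k).index,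
        (rL i).left k ⊗ₜ[K] ((rB i k).left s ⊗ₜ[K] ((rB i k).right s ⊗ₜ[K] r.right i)) := by
  rw [exp1 a r rL, map_sum]
  refine Finset.sum_congr rfl fun i _ => ?_
  rw [map_sum]
  refine Finset.sum_congr rfl fun k _ => ?_
  rw [LinearMap.lTensor_tmul, bmap_repr _ _ (rB i k), tmul_sum]

lemma exp3 (a : A) (r : Coalgebra.Repr K a (A × A)) (rL : ∀ i, Coalgebra.Repr K (r.left i) (A × A))
    (rB : ∀ i k, Coalgebra.Repr K ((rL i).right k) (A × A))
    (rF : ∀ i k s, Coalgebra.Repr K ((rB i k).right s) (A × A)) :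
    LinearMap.lTensor A (LinearMap.lTensor A bmap)
        (LinearMap.lTensor A bmap (bmap (comul (R := K) a))) =
      ∑ i ∈ r.index, ∑ k ∈ (rL i).index, ∑ s ∈ (rB i k).index, ∑ t ∈ (rF i k s).index,
        (rL i).left k ⊗ₜ[K] ((rB i k).left s ⊗ₜ[K] ((rF i k s).left t ⊗ₜ[K]
          ((rF i k s).right t ⊗ₜ[K] r.right i))) := by
  rw [exp2 a r rL rB, map_sum]
  refine Finset.sum_congr rfl fun i _ => ?_
  rw [map_sum]
  refine Finset.sum_congr rfl fun k _ => ?_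
  rw [map_sum]
  refine Finset.sum_congr rfl fun s _ => ?_
  rw [LinearMap.lTensor_tmul, LinearMap.lTensor_tmul, bmap_repr _ _ (rF i k s), tmul_sum,
    tmul_sum]


lemma conv_assoc (f g h : A →ₗ[K] C) : conv (conv f g) h = conv f (conv g h) := by
  ext a
  let r := ℛ K a
  let r1 : (i : r.ι) → Coalgebra.Repr K (r.left i) (A × A) := fun i => ℛ K (r.left i)
  let r2 : (i : r.ι) → Coalgebra.Repr K (r.right i) (A × A) := fun i => ℛ K (r.right i)
  have key := Coalgebra.sum_map_tmul_tmul_eq f g h a (repr := r) (a₁ := r1) (a₂ := r2)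
  have key2 := congrArg (LinearMap.mul' K C ∘ₗ LinearMap.lTensor C (LinearMap.mul' K C)) key
  simp only [map_sum, LinearMap.coe_comp, Function.comp_apply, LinearMap.lTensor_tmul,
    LinearMap.mul'_apply] at key2
  rw [conv_repr _ _ _ r, conv_repr _ _ _ r]
  calc ∑ i ∈ r.index, conv f g (r.left i) * h (r.right i)
      = ∑ i ∈ r.index, ∑ j ∈ (r1 i).index,
          f ((r1 i).left j) * (g ((r1 i).right j) * h (r.right i)) := by
        refine Finset.sum_congr rfl fun i _ => ?_
        rw [conv_repr _ _ _ (r1 i), Finset.sum_mul]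
        simp [mul_assoc]
    _ = ∑ i ∈ r.index, ∑ j ∈ (r2 i).index,
          f (r.left i) * (g ((r2 i).left j) * h ((r2 i).right j)) := key2.symm
    _ = ∑ i ∈ r.index, f (r.left i) * conv g h (r.right i) := by
        refine Finset.sum_congr rfl fun i _ => ?_
        rw [conv_repr _ _ _ (r2 i), Finset.mul_sum]

lemma conv_cu (f : A →ₗ[K] C) : conv f cu = f := by
  ext a
  let r := ℛ K a
  have key := Coalgebra.sum_map_tmul_counit_eq (R := K) f a (repr := r)
  have key2 := congrArg (TensorProduct.rid K C) key
  simp only [map_sum, TensorProduct.rid_tmul] at key2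
  rw [conv_repr _ _ _ r]
  calc ∑ i ∈ r.index, f (r.left i) * cu (r.right i)
      = ∑ i ∈ r.index, counit (R := K) (r.right i) • f (r.left i) := by
        refine Finset.sum_congr rfl fun i _ => ?_
        rw [cu_apply, ← Algebra.commutes, ← Algebra.smul_def]
    _ = f a := by rw [key2]; simp

lemma cu_conv (f : A →ₗ[K] C) : conv cu f = f := by
  ext a
  let r := ℛ K a
  have key := Coalgebra.sum_counit_tmul_map_eq (R := K) f a (repr := r)
  have key2 := congrArg (TensorProduct.lid K C) key
  simp only [map_sum, TensorProduct.lid_tmul] at key2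
  rw [conv_repr _ _ _ r]
  calc ∑ i ∈ r.index, cu (r.left i) * f (r.right i)
      = ∑ i ∈ r.index, counit (R := K) (r.left i) • f (r.right i) := by
        refine Finset.sum_congr rfl fun i _ => ?_
        rw [cu_apply, ← Algebra.smul_def]
    _ = f a := by rw [key2]; simp

lemma conv_unique {f g h : A →ₗ[K] C} (h1 : conv f g = cu) (h2 : conv g h = cu) : f = h := by
  have : conv f (conv g h) = conv (conv f g) h := (conv_assoc f g h).symm
  rw [h1, h2, conv_cu, cu_conv] at this
  exact this


lemma conv_comul_comulS :
    conv (comul (R := K) (A := A)) (comul ∘ₗ antipode (R := K)) = cu := by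
  ext a
  let r := ℛ K a
  rw [conv_repr _ _ _ r, cu_apply]
  calc ∑ i ∈ r.index, comul (R := K) (r.left i) * (comul ∘ₗ antipode (R := K)) (r.right i)
      = comul (R := K) (∑ i ∈ r.index, r.left i * antipode (R := K) (r.right i)) := by
        rw [map_sum]; exact Finset.sum_congr rfl fun i _ => by simp [Bialgebra.comul_mul]
    _ = algebraMap K (A ⊗[K] A) (counit (R := K) a) := by
        rw [sum_mul_antipode_eq_algebraMap_counit r, Bialgebra.comul_algebraMap]


lemma comul_antipode_eq : (Tmap : A →ₗ[K] A ⊗[K] A) = comul ∘ₗ antipode (R := K) :=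
  conv_unique conv_Tmap_comul conv_comul_comulS

lemma comul_antipode (x : A) (r : Coalgebra.Repr K x (A × A)) :
    comul (R := K) (antipode (R := K) x) =
      ∑ i ∈ r.index, antipode (R := K) (r.right i) ⊗ₜ[K] antipode (R := K) (r.left i) := by
  have := LinearMap.congr_fun (comul_antipode_eq (K := K) (A := A)) x
  simp only [LinearMap.coe_comp, Function.comp_apply] at this
  rw [← this, Tmap_repr _ r]

lemma Tht_repr {ι : Type*} (x y : A) (r : Coalgebra.Repr K x ι) :
    Tht (x ⊗ₜ[K] y) = ∑ i ∈ r.index, r.left i ⊗ₜ[K] (antipode (R := K) (r.right i) * y) := by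
  rw [Tht, LinearMap.comp_apply, bmap_repr _ _ r, map_sum]
  exact Finset.sum_congr rfl fun i _ => by rw [LinearMap.lTensor_tmul, m2_tmul]

lemma exp0 (a : A) (r : Coalgebra.Repr K a (A × A)) (rL : ∀ i, Coalgebra.Repr K (r.left i) (A × A))
    (rB : ∀ i k, Coalgebra.Repr K ((rL i).right k) (A × A))
    (rF : ∀ i k s, Coalgebra.Repr K ((rB i k).right s) (A × A))
    (rR : ∀ i, Coalgebra.Repr K (r.right i) (A × A)) :
    Mt0 a =
      ∑ i ∈ r.index, ∑ k ∈ (rL i).index, ∑ s ∈ (rB i k).index, ∑ t ∈ (rF i k s).index,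
        ∑ m ∈ (rR i).index,
        (rL i).left k ⊗ₜ[K] ((rB i k).left s ⊗ₜ[K] ((rF i k s).left t ⊗ₜ[K]
          ((rF i k s).right t ⊗ₜ[K] ((rR i).left m ⊗ₜ[K] (rR i).right m)))) := by
  show LinearMap.lTensor A (LinearMap.lTensor A (LinearMap.lTensor A gmap))
      (LinearMap.lTensor A (LinearMap.lTensor A bmap)
        (LinearMap.lTensor A bmap (bmap (comul (R := K) a)))) = _
  rw [exp3 a r rL rB rF, map_sum]
  refine Finset.sum_congr rfl fun i _ => ?_
  rw [map_sum]
  refine Finset.sum_congr rfl fun k _ => ?_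
  rw [map_sum]
  refine Finset.sum_congr rfl fun s _ => ?_
  rw [map_sum]
  refine Finset.sum_congr rfl fun t _ => ?_
  rw [LinearMap.lTensor_tmul, LinearMap.lTensor_tmul, LinearMap.lTensor_tmul,
    gmap_repr _ _ (rR i), tmul_sum, tmul_sum, tmul_sum]

lemma expM (a : A) (r : Coalgebra.Repr K a (A × A)) (rL : ∀ i, Coalgebra.Repr K (r.left i) (A × A))
    (rB : ∀ i k, Coalgebra.Repr K ((rL i).right k) (A × A))
    (rR : ∀ i, Coalgebra.Repr K (r.right i) (A × A))
    (rC : ∀ i m, Coalgebra.Repr K ((rR i).left m) (A × A)) :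
    MtM a =
      ∑ i ∈ r.index, ∑ k ∈ (rL i).index, ∑ s ∈ (rB i k).index, ∑ m ∈ (rR i).index,
        ∑ n ∈ (rC i m).index,
        (rL i).left k ⊗ₜ[K] ((rB i k).left s ⊗ₜ[K] ((rB i k).right s ⊗ₜ[K]
          ((rC i m).left n ⊗ₜ[K] ((rC i m).right n ⊗ₜ[K] (rR i).right m)))) := by
  show LinearMap.lTensor A (LinearMap.lTensor A (LinearMap.lTensor A bmap))
      (LinearMap.lTensor A (LinearMap.lTensor A gmap)
        (LinearMap.lTensor A bmap (bmap (comul (R := K) a)))) = _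
  have h2 : LinearMap.lTensor A (LinearMap.lTensor A gmap)
      (LinearMap.lTensor A bmap (bmap (comul (R := K) a))) =
      ∑ i ∈ r.index, ∑ k ∈ (rL i).index, ∑ s ∈ (rB i k).index, ∑ m ∈ (rR i).index,
        (rL i).left k ⊗ₜ[K] ((rB i k).left s ⊗ₜ[K] ((rB i k).right s ⊗ₜ[K]
          ((rR i).left m ⊗ₜ[K] (rR i).right m))) := by
    rw [exp2 a r rL rB, map_sum]
    refine Finset.sum_congr rfl fun i _ => ?_
    rw [map_sum]
    refine Finset.sum_congr rfl fun k _ => ?_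
    rw [map_sum]
    refine Finset.sum_congr rfl fun s _ => ?_
    rw [LinearMap.lTensor_tmul, LinearMap.lTensor_tmul, gmap_repr _ _ (rR i), tmul_sum,
      tmul_sum]
  rw [h2, map_sum]
  refine Finset.sum_congr rfl fun i _ => ?_
  rw [map_sum]
  refine Finset.sum_congr rfl fun k _ => ?_
  rw [map_sum]
  refine Finset.sum_congr rfl fun s _ => ?_
  rw [map_sum]
  refine Finset.sum_congr rfl fun m _ => ?_
  rw [LinearMap.lTensor_tmul, LinearMap.lTensor_tmul, LinearMap.lTensor_tmul,
    bmap_repr _ _ (rC i m), tmul_sum, tmul_sum, tmul_sum]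

lemma exp4 (a : A) (r : Coalgebra.Repr K a (A × A)) (rL : ∀ i, Coalgebra.Repr K (r.left i) (A × A))
    (rR : ∀ i, Coalgebra.Repr K (r.right i) (A × A)) :
    Mt4 a = ∑ i ∈ r.index, ∑ k ∈ (rL i).index, ∑ m ∈ (rR i).index,
        (rL i).left k ⊗ₜ[K] ((rL i).right k ⊗ₜ[K] ((rR i).left m ⊗ₜ[K] (rR i).right m)) := by
  show LinearMap.lTensor A gmap (bmap (comul (R := K) a)) = _
  rw [exp1 a r rL, map_sum]
  refine Finset.sum_congr rfl fun i _ => ?_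
  rw [map_sum]
  refine Finset.sum_congr rfl fun k _ => ?_
  rw [LinearMap.lTensor_tmul, gmap_repr _ _ (rR i), tmul_sum]

lemma exp4' (a : A) (r : Coalgebra.Repr K a (A × A)) (rL : ∀ i, Coalgebra.Repr K (r.left i) (A × A))
    (rB : ∀ i k, Coalgebra.Repr K ((rL i).right k) (A × A)) :
    Mt4' a = ∑ i ∈ r.index, ∑ k ∈ (rL i).index, ∑ s ∈ (rB i k).index,
        (rL i).left k ⊗ₜ[K] ((rB i k).left s ⊗ₜ[K] ((rB i k).right s ⊗ₜ[K] r.right i)) := by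
  show LinearMap.lTensor A bmap (bmap (comul (R := K) a)) = _
  exact exp2 a r rL rB


lemma core6 (a u v : A) :
    Q6 u v (Mt0 (K := K) a) = Q4 u v (Mt4 (K := K) a) := by
  let r := ℛ K a
  let rL : ∀ i, Coalgebra.Repr K (r.left i) (A × A) := fun i => ℛ K (r.left i)
  let rB : ∀ i k, Coalgebra.Repr K ((rL i).right k) (A × A) := fun i k => ℛ K ((rL i).right k)
  let rF : ∀ i k s, Coalgebra.Repr K ((rB i k).right s) (A × A) := fun i k s => ℛ K ((rB i k).right s)
  let rR : ∀ i, Coalgebra.Repr K (r.right i) (A × A) := fun i => ℛ K (r.right i)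
  let rC : ∀ i m, Coalgebra.Repr K ((rR i).left m) (A × A) := fun i m => ℛ K ((rR i).left m)
  rw [treeEq1, treeEq2.symm]
  calc Q6 u v (MtM a)
      = ∑ i ∈ r.index, ∑ k ∈ (rL i).index, ∑ s ∈ (rB i k).index, ∑ m ∈ (rR i).index,
          ∑ n ∈ (rC i m).index,
          ((rL i).left k ⊗ₜ[K] (antipode (R := K) ((rB i k).left s) *
            ((rC i m).left n * (antipode (R := K) ((rC i m).right n) * v)))) ⊗ₜ[K]
          ((rB i k).right s ⊗ₜ[K] (antipode (R := K) ((rR i).right m) * u)) := by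
        rw [expM a r rL rB rR rC, map_sum]
        refine Finset.sum_congr rfl fun i _ => ?_
        rw [map_sum]
        refine Finset.sum_congr rfl fun k _ => ?_
        rw [map_sum]
        refine Finset.sum_congr rfl fun s _ => ?_
        rw [map_sum]
        refine Finset.sum_congr rfl fun m _ => ?_
        rw [map_sum]
        exact Finset.sum_congr rfl fun n _ => Q6_tmul _ _ _ _ _ _ _ _
    _ = ∑ i ∈ r.index, ∑ k ∈ (rL i).index, ∑ s ∈ (rB i k).index,
          ((rL i).left k ⊗ₜ[K] (antipode (R := K) ((rB i k).left s) * v)) ⊗ₜ[K]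
          ((rB i k).right s ⊗ₜ[K] (antipode (R := K) (r.right i) * u)) := by
        refine Finset.sum_congr rfl fun i _ => Finset.sum_congr rfl fun k _ =>
          Finset.sum_congr rfl fun s _ => ?_
        calc ∑ m ∈ (rR i).index, ∑ n ∈ (rC i m).index,
              ((rL i).left k ⊗ₜ[K] (antipode (R := K) ((rB i k).left s) *
                ((rC i m).left n * (antipode (R := K) ((rC i m).right n) * v)))) ⊗ₜ[K]
              ((rB i k).right s ⊗ₜ[K] (antipode (R := K) ((rR i).right m) * u))
            = ∑ m ∈ (rR i).index, counit (R := K) ((rR i).left m) •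
                (((rL i).left k ⊗ₜ[K] (antipode (R := K) ((rB i k).left s) * v)) ⊗ₜ[K]
                ((rB i k).right s ⊗ₜ[K] (antipode (R := K) ((rR i).right m) * u))) := by
              refine Finset.sum_congr rfl fun m _ => ?_
              have hsum : ∑ n ∈ (rC i m).index,
                  (rC i m).left n * (antipode (R := K) ((rC i m).right n) * v)
                  = counit (R := K) ((rR i).left m) • v := by
                rw [Finset.sum_congr rfl (fun n _ => (mul_assoc _ _ _).symm), ← Finset.sum_mul,
                  sum_mul_antipode_eq_algebraMap_counit (rC i m), ← Algebra.smul_def]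
              rw [← TensorProduct.sum_tmul, ← tmul_sum, ← Finset.mul_sum, hsum,
                mul_smul_comm, tmul_smul, ← smul_tmul']
            _ = ((rL i).left k ⊗ₜ[K] (antipode (R := K) ((rB i k).left s) * v)) ⊗ₜ[K]
                ((rB i k).right s ⊗ₜ[K] (antipode (R := K) (r.right i) * u)) := by
              have : ∀ m ∈ (rR i).index, counit (R := K) ((rR i).left m) •
                  (((rL i).left k ⊗ₜ[K] (antipode (R := K) ((rB i k).left s) * v)) ⊗ₜ[K]
                  ((rB i k).right s ⊗ₜ[K] (antipode (R := K) ((rR i).right m) * u)))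
                  = ((rL i).left k ⊗ₜ[K] (antipode (R := K) ((rB i k).left s) * v)) ⊗ₜ[K]
                  ((rB i k).right s ⊗ₜ[K] (antipode (R := K)
                    (counit (R := K) ((rR i).left m) • (rR i).right m) * u)) := by
                intro m _
                rw [map_smul, smul_mul_assoc, tmul_smul, tmul_smul]
              rw [Finset.sum_congr rfl this, ← tmul_sum, ← tmul_sum]
              rw [show ∑ m ∈ (rR i).index, antipode (R := K)
                    (counit (R := K) ((rR i).left m) • (rR i).right m) * u
                  = antipode (R := K) (r.right i) * u by
                rw [← Finset.sum_mul, ← map_sum, counit_smul_sum _ (rR i)]]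
    _ = Q4 u v (Mt4' a) := by
        rw [exp4' a r rL rB, map_sum]
        refine Finset.sum_congr rfl fun i _ => ?_
        rw [map_sum]
        refine Finset.sum_congr rfl fun k _ => ?_
        rw [map_sum]
        exact Finset.sum_congr rfl fun s _ => (Q4_tmul _ _ _ _ _ _).symm


lemma expD4 (x : A) (rx : Coalgebra.Repr K x (A × A)) (rBx : ∀ k, Coalgebra.Repr K (rx.right k) (A × A))
    (rFx : ∀ k s, Coalgebra.Repr K ((rBx k).right s) (A × A)) :
    D4 (K := K) x = ∑ k ∈ rx.index, ∑ s ∈ (rBx k).index, ∑ t ∈ (rFx k s).index,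
      rx.left k ⊗ₜ[K] ((rBx k).left s ⊗ₜ[K] ((rFx k s).left t ⊗ₜ[K] (rFx k s).right t)) := by
  rw [D4, LinearMap.comp_apply, LinearMap.comp_apply, ← rx.eq, map_sum, map_sum]
  refine Finset.sum_congr rfl fun k _ => ?_
  rw [LinearMap.lTensor_tmul, ← (rBx k).eq, tmul_sum, map_sum]
  refine Finset.sum_congr rfl fun s _ => ?_
  rw [LinearMap.lTensor_tmul, LinearMap.lTensor_tmul, ← (rFx k s).eq, tmul_sum, tmul_sum]

lemma coreMap :
    (Dm ∘ₗ Tht : A ⊗[K] A →ₗ[K] (A ⊗[K] A) ⊗[K] (A ⊗[K] A)) =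
      TensorProduct.map Tht Tht ∘ₗ taum ∘ₗ TensorProduct.map comul comul := by
  apply TensorProduct.ext'
  intro a b
  let r := ℛ K a
  let rL : ∀ i, Coalgebra.Repr K (r.left i) (A × A) := fun i => ℛ K (r.left i)
  let rB : ∀ i k, Coalgebra.Repr K ((rL i).right k) (A × A) := fun i k => ℛ K ((rL i).right k)
  let rF : ∀ i k s, Coalgebra.Repr K ((rB i k).right s) (A × A) := fun i k s => ℛ K ((rB i k).right s)
  let rR : ∀ i, Coalgebra.Repr K (r.right i) (A × A) := fun i => ℛ K (r.right i)
  let rb := ℛ K b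
  have hL : ∀ i, Dm (r.left i ⊗ₜ[K] (antipode (R := K) (r.right i) * b)) =
      ∑ k ∈ (rL i).index, ∑ s ∈ (rB i k).index, ∑ t ∈ (rF i k s).index,
        ∑ m ∈ (rR i).index, ∑ j ∈ rb.index,
        ((rL i).left k ⊗ₜ[K] (antipode (R := K) ((rB i k).left s) *
          ((rF i k s).right t * (antipode (R := K) ((rR i).left m) * rb.right j)))) ⊗ₜ[K]
        ((rF i k s).left t ⊗ₜ[K] (antipode (R := K) ((rR i).right m) * rb.left j)) := by
    intro i
    have hy : comul (R := K) (antipode (R := K) (r.right i) * b) =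
        ∑ m ∈ (rR i).index, ∑ j ∈ rb.index,
          (antipode (R := K) ((rR i).right m) * rb.left j) ⊗ₜ[K]
          (antipode (R := K) ((rR i).left m) * rb.right j) := by
      rw [Bialgebra.comul_mul, comul_antipode _ (rR i), ← rb.eq, Finset.sum_mul]
      refine Finset.sum_congr rfl fun m _ => ?_
      rw [Finset.mul_sum]
      exact Finset.sum_congr rfl fun j _ => Algebra.TensorProduct.tmul_mul_tmul _ _ _ _
    rw [Dm, LinearMap.comp_apply, TensorProduct.map_tmul, hy,
      expD4 _ (rL i) (rB i) (rF i)]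
    rw [sum_tmul, map_sum]
    refine Finset.sum_congr rfl fun k _ => ?_
    rw [sum_tmul, map_sum]
    refine Finset.sum_congr rfl fun s _ => ?_
    rw [sum_tmul, map_sum]
    refine Finset.sum_congr rfl fun t _ => ?_
    rw [tmul_sum, map_sum]
    refine Finset.sum_congr rfl fun m _ => ?_
    rw [tmul_sum, map_sum]
    refine Finset.sum_congr rfl fun j _ => ?_
    rw [Fm_tmul, mul_assoc]
  have hLHS : Dm (Tht (a ⊗ₜ[K] b)) =
      ∑ j ∈ rb.index, Q6 (rb.left j) (rb.right j) (Mt0 (K := K) a) := by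
    rw [Tht_repr _ _ r, map_sum]
    calc ∑ i ∈ r.index, Dm (r.left i ⊗ₜ[K] (antipode (R := K) (r.right i) * b))
        = ∑ i ∈ r.index, ∑ j ∈ rb.index, ∑ k ∈ (rL i).index, ∑ s ∈ (rB i k).index,
            ∑ t ∈ (rF i k s).index, ∑ m ∈ (rR i).index,
            ((rL i).left k ⊗ₜ[K] (antipode (R := K) ((rB i k).left s) *
              ((rF i k s).right t * (antipode (R := K) ((rR i).left m) * rb.right j)))) ⊗ₜ[K]
            ((rF i k s).left t ⊗ₜ[K] (antipode (R := K) ((rR i).right m) * rb.left j)) := by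
          refine Finset.sum_congr rfl fun i _ => ?_
          rw [hL i]
          rw [show (∑ k ∈ (rL i).index, ∑ s ∈ (rB i k).index, ∑ t ∈ (rF i k s).index,
              ∑ m ∈ (rR i).index, ∑ j ∈ rb.index,
              ((rL i).left k ⊗ₜ[K] (antipode (R := K) ((rB i k).left s) *
                ((rF i k s).right t * (antipode (R := K) ((rR i).left m) * rb.right j)))) ⊗ₜ[K]
              ((rF i k s).left t ⊗ₜ[K] (antipode (R := K) ((rR i).right m) * rb.left j)))
              = ∑ k ∈ (rL i).index, ∑ s ∈ (rB i k).index, ∑ t ∈ (rF i k s).index,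
              ∑ j ∈ rb.index, ∑ m ∈ (rR i).index, _ from
            Finset.sum_congr rfl fun k _ => Finset.sum_congr rfl fun s _ =>
              Finset.sum_congr rfl fun t _ => Finset.sum_comm]
          rw [show (∑ k ∈ (rL i).index, ∑ s ∈ (rB i k).index, ∑ t ∈ (rF i k s).index,
              ∑ j ∈ rb.index, ∑ m ∈ (rR i).index,
              ((rL i).left k ⊗ₜ[K] (antipode (R := K) ((rB i k).left s) *
                ((rF i k s).right t * (antipode (R := K) ((rR i).left m) * rb.right j)))) ⊗ₜ[K]
              ((rF i k s).left t ⊗ₜ[K] (antipode (R := K) ((rR i).right m) * rb.left j)))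
              = ∑ k ∈ (rL i).index, ∑ s ∈ (rB i k).index, ∑ j ∈ rb.index,
              ∑ t ∈ (rF i k s).index, ∑ m ∈ (rR i).index, _ from
            Finset.sum_congr rfl fun k _ => Finset.sum_congr rfl fun s _ => Finset.sum_comm]
          rw [show (∑ k ∈ (rL i).index, ∑ s ∈ (rB i k).index, ∑ j ∈ rb.index,
              ∑ t ∈ (rF i k s).index, ∑ m ∈ (rR i).index,
              ((rL i).left k ⊗ₜ[K] (antipode (R := K) ((rB i k).left s) *
                ((rF i k s).right t * (antipode (R := K) ((rR i).left m) * rb.right j)))) ⊗ₜ[K]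
              ((rF i k s).left t ⊗ₜ[K] (antipode (R := K) ((rR i).right m) * rb.left j)))
              = ∑ k ∈ (rL i).index, ∑ j ∈ rb.index, ∑ s ∈ (rB i k).index,
              ∑ t ∈ (rF i k s).index, ∑ m ∈ (rR i).index, _ from
            Finset.sum_congr rfl fun k _ => Finset.sum_comm]
          exact Finset.sum_comm
      _ = ∑ j ∈ rb.index, ∑ i ∈ r.index, ∑ k ∈ (rL i).index, ∑ s ∈ (rB i k).index,
            ∑ t ∈ (rF i k s).index, ∑ m ∈ (rR i).index,
            ((rL i).left k ⊗ₜ[K] (antipode (R := K) ((rB i k).left s) *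
              ((rF i k s).right t * (antipode (R := K) ((rR i).left m) * rb.right j)))) ⊗ₜ[K]
            ((rF i k s).left t ⊗ₜ[K] (antipode (R := K) ((rR i).right m) * rb.left j)) :=
          Finset.sum_comm
      _ = ∑ j ∈ rb.index, Q6 (rb.left j) (rb.right j) (Mt0 (K := K) a) := by
          refine Finset.sum_congr rfl fun j _ => ?_
          rw [exp0 a r rL rB rF rR, map_sum]
          refine (Finset.sum_congr rfl fun i _ => ?_).symm
          rw [map_sum]
          refine Finset.sum_congr rfl fun k _ => ?_
          rw [map_sum]
          refine Finset.sum_congr rfl fun s _ => ?_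
          rw [map_sum]
          refine Finset.sum_congr rfl fun t _ => ?_
          rw [map_sum]
          exact Finset.sum_congr rfl fun m _ => Q6_tmul _ _ _ _ _ _ _ _
  have hRHS : TensorProduct.map Tht Tht (taum (comul (R := K) a ⊗ₜ[K] comul (R := K) b)) =
      ∑ j ∈ rb.index, Q4 (rb.left j) (rb.right j) (Mt4 (K := K) a) := by
    rw [← r.eq, ← rb.eq, sum_tmul, map_sum, map_sum]
    calc ∑ i ∈ r.index, TensorProduct.map Tht Tht
          (taum ((r.left i ⊗ₜ[K] r.right i) ⊗ₜ[K] ∑ j ∈ rb.index, rb.left j ⊗ₜ[K] rb.right j))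
        = ∑ i ∈ r.index, ∑ j ∈ rb.index, ∑ k ∈ (rL i).index, ∑ m ∈ (rR i).index,
            ((rL i).left k ⊗ₜ[K] (antipode (R := K) ((rL i).right k) * rb.right j)) ⊗ₜ[K]
            ((rR i).left m ⊗ₜ[K] (antipode (R := K) ((rR i).right m) * rb.left j)) := by
          refine Finset.sum_congr rfl fun i _ => ?_
          rw [tmul_sum, map_sum, map_sum]
          refine Finset.sum_congr rfl fun j _ => ?_
          rw [taum_tmul, TensorProduct.map_tmul, Tht_repr _ _ (rL i), Tht_repr _ _ (rR i),
            sum_tmul]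
          exact Finset.sum_congr rfl fun k _ => by rw [tmul_sum]
      _ = ∑ j ∈ rb.index, ∑ i ∈ r.index, ∑ k ∈ (rL i).index, ∑ m ∈ (rR i).index,
            ((rL i).left k ⊗ₜ[K] (antipode (R := K) ((rL i).right k) * rb.right j)) ⊗ₜ[K]
            ((rR i).left m ⊗ₜ[K] (antipode (R := K) ((rR i).right m) * rb.left j)) :=
          Finset.sum_comm
      _ = ∑ j ∈ rb.index, Q4 (rb.left j) (rb.right j) (Mt4 (K := K) a) := by
          refine Finset.sum_congr rfl fun j _ => ?_
          rw [exp4 a r rL rR, map_sum]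
          refine (Finset.sum_congr rfl fun i _ => ?_).symm
          rw [map_sum]
          refine Finset.sum_congr rfl fun k _ => ?_
          rw [map_sum]
          exact Finset.sum_congr rfl fun m _ => Q4_tmul _ _ _ _ _ _
  simp only [LinearMap.comp_apply, TensorProduct.map_tmul]
  rw [hLHS, hRHS]
  exact Finset.sum_congr rfl fun j _ => core6 a (rb.left j) (rb.right j)


lemma exists_fin {M N : Type*} [AddCommMonoid M] [AddCommMonoid N] [Module K M] [Module K N]
    (t : M ⊗[K] N) : ∃ (n : ℕ) (f : Fin n → M) (g : Fin n → N),
      t = ∑ i, f i ⊗ₜ[K] g i := by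
  induction t with
  | zero => exact ⟨0, ![] , ![], by simp⟩
  | tmul x y => exact ⟨1, fun _ => x, fun _ => y, by simp⟩
  | add x y hx hy =>
    obtain ⟨n, f, g, hf⟩ := hx
    obtain ⟨m, f', g', hf'⟩ := hy
    refine ⟨n + m, Fin.append f f', Fin.append g g', ?_⟩
    rw [Fin.sum_univ_add]
    simp [Fin.append_left, Fin.append_right, hf, hf']

lemma exists_fin3 {M N P : Type*} [AddCommMonoid M] [AddCommMonoid N] [AddCommMonoid P]
    [Module K M] [Module K N] [Module K P] (t : M ⊗[K] (N ⊗[K] P)) :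
    ∃ (n : ℕ) (f : Fin n → M) (g : Fin n → N) (h : Fin n → P),
      t = ∑ i, f i ⊗ₜ[K] (g i ⊗ₜ[K] h i) := by
  induction t with
  | zero => exact ⟨0, ![], ![], ![], by simp⟩
  | tmul x u =>
    obtain ⟨n, g, h, hu⟩ := exists_fin (K := K) u
    exact ⟨n, fun _ => x, g, h, by rw [hu, tmul_sum]⟩
  | add x y hx hy =>
    obtain ⟨n, f, g, h, hf⟩ := hx
    obtain ⟨m, f', g', h', hf'⟩ := hy
    refine ⟨n + m, Fin.append f f', Fin.append g g', Fin.append h h', ?_⟩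
    rw [Fin.sum_univ_add]
    simp [Fin.append_left, Fin.append_right, hf, hf']

lemma exists_fin4 {M N P Q : Type*} [AddCommMonoid M] [AddCommMonoid N] [AddCommMonoid P]
    [AddCommMonoid Q] [Module K M] [Module K N] [Module K P] [Module K Q]
    (t : M ⊗[K] (N ⊗[K] (P ⊗[K] Q))) :
    ∃ (n : ℕ) (f : Fin n → M) (g : Fin n → N) (h : Fin n → P) (h' : Fin n → Q),
      t = ∑ i, f i ⊗ₜ[K] (g i ⊗ₜ[K] (h i ⊗ₜ[K] h' i)) := by
  induction t with
  | zero => exact ⟨0, ![], ![], ![], ![], by simp⟩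
  | tmul x u =>
    obtain ⟨n, g, h, h', hu⟩ := exists_fin3 (K := K) u
    exact ⟨n, fun _ => x, g, h, h', by rw [hu, tmul_sum]⟩
  | add x y hx hy =>
    obtain ⟨n, f, g, h, h'', hf⟩ := hx
    obtain ⟨m, f', g', h', h''', hf'⟩ := hy
    refine ⟨n + m, Fin.append f f', Fin.append g g', Fin.append h h', Fin.append h'' h''', ?_⟩
    rw [Fin.sum_univ_add]
    simp [Fin.append_left, Fin.append_right, hf, hf']

/-- turn a `Fin`-indexed representation into a `Coalgebra.Repr` -/
noncomputable def finRepr (a : A) (n : ℕ) (x y : Fin n → A)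
    (h : comul (R := K) a = ∑ i, x i ⊗ₜ[K] y i) : Coalgebra.Repr K a (Fin n) where
  index := Finset.univ
  left := x
  right := y
  eq := h.symm

lemma theta_eq (θ : A ⊗[K] A →ₗ[K] A ⊗[K] A)
    (hθ : ∀ (a b : A) (n : ℕ) (x y : Fin n → A),
      Coalgebra.comul (R := K) a = ∑ i, x i ⊗ₜ[K] y i →
      θ (a ⊗ₜ[K] b) = ∑ i, x i ⊗ₜ[K] (antipode (R := K) (y i) * b)) :
    θ = Tht := by
  apply TensorProduct.ext'
  intro a b
  obtain ⟨n, x, y, h⟩ := exists_fin (K := K) (comul (R := K) a)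
  rw [hθ a b n x y h, Tht_repr _ _ (finRepr a n x y h)]
  rfl

lemma D_eq (D : A ⊗[K] A →ₗ[K] (A ⊗[K] A) ⊗[K] (A ⊗[K] A))
    (hD : ∀ (a b : A) (n : ℕ) (x₁ x₂ x₃ x₄ : Fin n → A) (p : ℕ) (u v : Fin p → A),
      (LinearMap.lTensor A (LinearMap.lTensor A (Coalgebra.comul (R := K))))
          ((LinearMap.lTensor A (Coalgebra.comul (R := K))) (Coalgebra.comul (R := K) a)) =
        ∑ i, x₁ i ⊗ₜ[K] (x₂ i ⊗ₜ[K] (x₃ i ⊗ₜ[K] x₄ i)) →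
      Coalgebra.comul (R := K) b = ∑ j, u j ⊗ₜ[K] v j →
      D (a ⊗ₜ[K] b) =
        ∑ i, ∑ j,
          ((x₁ i) ⊗ₜ[K] (antipode (R := K) (x₂ i) * x₄ i * v j)) ⊗ₜ[K]
            ((x₃ i) ⊗ₜ[K] (u j))) :
    D = Dm := by
  apply TensorProduct.ext'
  intro a b
  obtain ⟨n, g₁, g₂, g₃, g₄, h4⟩ := exists_fin4 (K := K) (D4 (K := K) a)
  obtain ⟨p, u, v, hb⟩ := exists_fin (K := K) (comul (R := K) b)
  have h4' : (LinearMap.lTensor A (LinearMap.lTensor A (Coalgebra.comul (R := K))))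
      ((LinearMap.lTensor A (Coalgebra.comul (R := K))) (Coalgebra.comul (R := K) a)) =
      ∑ i, g₁ i ⊗ₜ[K] (g₂ i ⊗ₜ[K] (g₃ i ⊗ₜ[K] g₄ i)) := h4
  rw [hD a b n g₁ g₂ g₃ g₄ p u v h4' hb]
  rw [Dm, LinearMap.comp_apply, TensorProduct.map_tmul, h4, hb, sum_tmul, map_sum]
  refine (Finset.sum_congr rfl fun i _ => ?_).symm
  rw [tmul_sum, map_sum]
  refine Finset.sum_congr rfl fun j _ => ?_
  rw [Fm_tmul]

end Stmt12Aux

/-- In the setting of Statement 11 (with `B = A^cop`, so that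
`comul_B b = Σ b₂ ⊗ b₁` when `comul_A b = Σ b₁ ⊗ b₂`), let `Δ_#` be the smash
coproduct on `A # B`, `Δ_#(a # b) = Σ (a₁ # S(a₂) a₄ b₂) ⊗ (a₃ # b₁)`, encoded by the
linear map `D`.  Then the isomorphism `θ(a ⊗ b) = Σ a₁ # S(a₂) b` is also a coalgebra
map: `Δ_#(θ(a ⊗ b)) = Σ θ(a₁ ⊗ b₂) ⊗ θ(a₂ ⊗ b₁)`.  Hence the bicrossproduct `A # B`
is isomorphic, as a Hopf algebra, to the tensor product `A ⊗ A^cop`. -/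
theorem stmt_12 (K A : Type*) [Field K] [Ring A] [HopfAlgebra K A]
    (hS : Function.Bijective (HopfAlgebra.antipode (R := K) (A := A)))
    (θ : A ⊗[K] A →ₗ[K] A ⊗[K] A)
    (hθ : ∀ (a b : A) (n : ℕ) (x y : Fin n → A),
      Coalgebra.comul (R := K) a = ∑ i, x i ⊗ₜ[K] y i →
      θ (a ⊗ₜ[K] b) = ∑ i, x i ⊗ₜ[K] (HopfAlgebra.antipode (R := K) (y i) * b))
    (D : A ⊗[K] A →ₗ[K] (A ⊗[K] A) ⊗[K] (A ⊗[K] A))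
    (hD : ∀ (a b : A) (n : ℕ) (x₁ x₂ x₃ x₄ : Fin n → A) (p : ℕ) (u v : Fin p → A),
      (LinearMap.lTensor A (LinearMap.lTensor A (Coalgebra.comul (R := K))))
          ((LinearMap.lTensor A (Coalgebra.comul (R := K))) (Coalgebra.comul (R := K) a)) =
        ∑ i, x₁ i ⊗ₜ[K] (x₂ i ⊗ₜ[K] (x₃ i ⊗ₜ[K] x₄ i)) →
      Coalgebra.comul (R := K) b = ∑ j, u j ⊗ₜ[K] v j →
      D (a ⊗ₜ[K] b) =
        ∑ i, ∑ j,
          ((x₁ i) ⊗ₜ[K] (HopfAlgebra.antipode (R := K) (x₂ i) * x₄ i * v j)) ⊗ₜ[K]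
            ((x₃ i) ⊗ₜ[K] (u j))) :
    ∀ (a b : A) (n : ℕ) (x y : Fin n → A) (p : ℕ) (u v : Fin p → A),
      Coalgebra.comul (R := K) a = ∑ i, x i ⊗ₜ[K] y i →
      Coalgebra.comul (R := K) b = ∑ j, u j ⊗ₜ[K] v j →
      D (θ (a ⊗ₜ[K] b)) = ∑ i, ∑ j, θ (x i ⊗ₜ[K] v j) ⊗ₜ[K] θ (y i ⊗ₜ[K] u j) := by
  intro a b n x y p u v ha hb
  rw [Stmt12Aux.theta_eq θ hθ, Stmt12Aux.D_eq D hD]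
  have hc := LinearMap.congr_fun (Stmt12Aux.coreMap (K := K) (A := A)) (a ⊗ₜ[K] b)
  simp only [LinearMap.comp_apply, TensorProduct.map_tmul] at hc
  rw [hc, ha, hb, TensorProduct.sum_tmul, map_sum, map_sum]
  refine Finset.sum_congr rfl fun i _ => ?_
  rw [TensorProduct.tmul_sum, map_sum, map_sum]
  refine Finset.sum_congr rfl fun j _ => ?_
  rw [Stmt12Aux.taum_tmul, TensorProduct.map_tmul]
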